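/- Components of the m-fold product applied to the first basis vector: with U_n^{σ} the one-step matrices of the repeated-interaction model and e = (1,0,…,0) ∈ ℂ^{N+1}, for m ≤ N one has (U₁^σ⋯U_m^σ e)₀ = c^m (gz)^m, (U₁^σ⋯U_m^σ e)_k = c^m · g w (gz)^{m-k} for 1 ≤ k ≤ m, and 0 for m < k ≤ N, where c = e^{iτε}, g = g^σ(τ), z = z^σ(τ), w = w^σ(τ). -/

import Mathlib

/-- The one-step evolution matrix `U_n^σ` of size `(N+1)×(N+1)`:
row 0 is `c·g·(zδ_{j0} + wδ_{jn})`, row `n` is `c·g·(wδ_{j0} + z⁻δ_{jn})`,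
all other rows are `c·δ_{ij}`. -/
def Umat (N n : ℕ) (c g w z zm : ℂ) : Matrix (Fin (N + 1)) (Fin (N + 1)) ℂ :=
  fun i j =>
    if (i : ℕ) = 0 then
      c * g * ((if (j : ℕ) = 0 then z else 0) + (if (j : ℕ) = n then w else 0))
    else if (i : ℕ) = n then
      c * g * ((if (j : ℕ) = 0 then w else 0) + (if (j : ℕ) = n then zm else 0))
    else if i = j then c else 0

lemma Umat_mulVec (N n : ℕ) (hn : n ≤ N) (c g w z zm : ℂ)
    (v : Fin (N+1) → ℂ) (i : Fin (N+1)) :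
    Matrix.mulVec (Umat N n c g w z zm) v i =
      if (i : ℕ) = 0 then c * g * (z * v 0 + w * v ⟨n, by omega⟩)
      else if (i : ℕ) = n then c * g * (w * v 0 + zm * v ⟨n, by omega⟩)
      else c * v i := by
  have e0 : ∀ j : Fin (N+1), ((j : ℕ) = 0) = (j = 0) := by
    intro j; simp [Fin.ext_iff, -Fin.val_eq_zero_iff]
  have en : ∀ j : Fin (N+1), ((j : ℕ) = n) = (j = ⟨n, by omega⟩) := by
    intro j; simp [Fin.ext_iff]
  simp only [Matrix.mulVec, dotProduct, Umat, e0, en]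
  split_ifs with h0 hn'
  · simp [add_mul, mul_add, Finset.sum_add_distrib, ite_mul, mul_comm]
    ring
  · simp [add_mul, mul_add, Finset.sum_add_distrib, ite_mul, mul_comm]
    ring
  · rw [Finset.sum_eq_single i]
    · simp
    · intro b _ hb; simp [hb.symm]
    · simp

lemma Umat_prod_fixed (N m : ℕ) (c g w z zm : ℂ) (t : Fin (N+1)) (ht : m < (t : ℕ)) :
    Matrix.mulVec (((List.range m).map (fun n => Umat N (n + 1) c g w z zm)).prod)
        (fun j => if j = t then 1 else 0)
      = fun j => c ^ m * (if j = t then 1 else 0) := by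
  induction m with
  | zero => simp [Matrix.one_mulVec]
  | succ m ih =>
    rw [List.range_succ, List.map_append, List.prod_append]
    simp only [List.map_cons, List.map_nil, List.prod_cons, List.prod_nil, mul_one]
    rw [← Matrix.mulVec_mulVec]
    have hmn : m + 1 ≤ N := by omega
    have h1 : Matrix.mulVec (Umat N (m+1) c g w z zm) (fun j => if j = t then 1 else 0)
        = fun j : Fin (N+1) => c * (if j = t then 1 else 0) := by
      funext i
      rw [Umat_mulVec N (m+1) hmn]
      have ht0 : ¬ ((0 : Fin (N+1)) = t) := by
        simp [Fin.ext_iff]; omega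
      have htm : ¬ ((⟨m+1, by omega⟩ : Fin (N+1)) = t) := by
        simp [Fin.ext_iff]; omega
      split_ifs with h0 hn' h2 <;> simp_all [Fin.ext_iff, -Fin.val_eq_zero_iff]
    rw [h1]
    have h2 : (fun j : Fin (N+1) => c * (if j = t then 1 else 0))
        = c • (fun j : Fin (N+1) => if j = t then (1:ℂ) else 0) := by
      funext j; simp
    rw [h2, Matrix.mulVec_smul, ih (by omega)]
    funext j
    simp [pow_succ]
    ring

lemma Umat_prod_basis_aux (N m : ℕ) (hmN : m ≤ N) (c g w z zm : ℂ) :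
    Matrix.mulVec (((List.range m).map (fun n => Umat N (n + 1) c g w z zm)).prod)
        (fun j => if (j : ℕ) = 0 then 1 else 0)
      = fun k : Fin (N+1) => if (k : ℕ) = 0 then c ^ m * (g * z) ^ m
        else if (k : ℕ) ≤ m then c ^ m * g * w * (g * z) ^ (m - (k : ℕ))
        else (0:ℂ) := by
  induction m with
  | zero =>
    simp only [List.range_zero, List.map_nil, List.prod_nil, Matrix.one_mulVec]
    funext k
    by_cases h : (k : ℕ) = 0 <;> simp [h]
  | succ m ih =>
    have hmN' : m ≤ N := by omega
    rw [List.range_succ, List.map_append, List.prod_append]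
    simp only [List.map_cons, List.map_nil, List.prod_cons, List.prod_nil, mul_one]
    rw [← Matrix.mulVec_mulVec]
    have h1 : Matrix.mulVec (Umat N (m+1) c g w z zm)
        (fun j : Fin (N+1) => if (j : ℕ) = 0 then 1 else 0)
      = (fun j : Fin (N+1) => (c*g*z) * (if (j : ℕ) = 0 then 1 else 0))
        + (c*g*w) • (fun j : Fin (N+1) => if j = (⟨m+1, by omega⟩ : Fin (N+1)) then (1:ℂ) else 0) := by
      funext i
      rw [Umat_mulVec N (m+1) (by omega)]
      simp only [Pi.add_apply, Pi.smul_apply, smul_eq_mul]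
      split_ifs with h0 hn' <;> simp_all [Fin.ext_iff, -Fin.val_eq_zero_iff]
    rw [h1, Matrix.mulVec_add, Matrix.mulVec_smul]
    have h2 : (fun j : Fin (N+1) => (c*g*z) * (if (j : ℕ) = 0 then 1 else 0))
        = (c*g*z) • (fun j : Fin (N+1) => if (j : ℕ) = 0 then (1:ℂ) else 0) := by
      funext j; simp
    rw [h2, Matrix.mulVec_smul, ih hmN',
      Umat_prod_fixed N m c g w z zm ⟨m+1, by omega⟩ (by simp)]
    funext k
    simp only [Pi.add_apply, Pi.smul_apply, smul_eq_mul]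
    by_cases hk0 : (k : ℕ) = 0
    · have : ¬ (k = (⟨m+1, by omega⟩ : Fin (N+1))) := by simp [Fin.ext_iff]; omega
      simp [hk0, this]; ring
    · by_cases hkm : (k : ℕ) ≤ m
      · have hne : ¬ (k = (⟨m+1, by omega⟩ : Fin (N+1))) := by simp [Fin.ext_iff]; omega
        have hsub : m + 1 - (k : ℕ) = (m - (k : ℕ)) + 1 := by omega
        simp [hk0, hkm, hne, Nat.le_succ_of_le hkm, hsub, pow_succ]
        ring
      · by_cases hkm1 : (k : ℕ) = m + 1
        · have heq : k = (⟨m+1, by omega⟩ : Fin (N+1)) := by simp [Fin.ext_iff]; omega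
          simp [hk0, hkm, hkm1, heq, pow_succ]
          ring
        · have hne : ¬ (k = (⟨m+1, by omega⟩ : Fin (N+1))) := by simp [Fin.ext_iff]; omega
          have : ¬ ((k : ℕ) ≤ m + 1) := by omega
          simp [hk0, hkm, hne, this]

/-- the components of `U₁^σ⋯U_m^σ e` for `e = (1,0,…,0)` are
`c^m(gz)^m` at position 0, `c^m gw(gz)^{m-k}` at positions `1 ≤ k ≤ m`,
and `0` at positions `m < k ≤ N`. -/
theorem Umat_prod_basis (N m : ℕ) (hm : 1 ≤ m) (hmN : m ≤ N)
    (c g w z zm : ℂ) (k : Fin (N + 1)) :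
    Matrix.mulVec (((List.range m).map (fun n => Umat N (n + 1) c g w z zm)).prod)
        (fun j => if (j : ℕ) = 0 then 1 else 0) k
      = if (k : ℕ) = 0 then c ^ m * (g * z) ^ m
        else if (k : ℕ) ≤ m then c ^ m * g * w * (g * z) ^ (m - (k : ℕ))
        else 0 := by
  rw [Umat_prod_basis_aux N m hmN c g w z zm]
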